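/- Let μ be a probability measure on F_q and define ν with ν̂(ξ) = 1 − γ + γ·|μ̂(ξ)|² where γ = 1/8. Then for all additive characters θ, ψ of F_q: |μ̂(θ)·μ̂(ψ)| ≤ ν̂(θ·ψ)², where θ·ψ denotes the character corresponding to the sum of the dual elements. -/

import Mathlib

open Finset

/-- The standard additive character of `ZMod p`. -/
noncomputable def ep (p : ℕ) (x : ZMod p) : ℂ :=
  Complex.exp (2 * Real.pi * Complex.I * (x.val : ℂ) / p)

/-- The Fourier transform of `μ : F → ℝ` at `s ∈ F`, via the field trace to `ZMod p`. -/
noncomputable def muHat (p : ℕ) {F : Type} [Field F] [Fintype F] [Algebra (ZMod p) F]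
    (μ : F → ℝ) (s : F) : ℂ :=
  ∑ t : F, (μ t : ℂ) * ep p (Algebra.trace (ZMod p) F (s * t))

lemma ep_norm (p : ℕ) (x : ZMod p) : ‖ep p x‖ = 1 := by
  have h : (2 * Real.pi * Complex.I * (x.val : ℂ) / p)
      = ((2 * Real.pi * x.val / p : ℝ) : ℂ) * Complex.I := by
    push_cast; ring
  rw [ep, h, Complex.norm_exp_ofReal_mul_I]

lemma ep_add (p : ℕ) [NeZero p] (x y : ZMod p) : ep p (x + y) = ep p x * ep p y := by
  have hp : (p : ℂ) ≠ 0 := by exact_mod_cast (NeZero.ne p)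
  set k : ℕ := (x.val + y.val) / p with hk
  have hnat : x.val + y.val = (x + y).val + p * k := by
    have h2 : (x + y).val = (x.val + y.val) % p := ZMod.val_add x y
    rw [h2, hk]; exact (Nat.mod_add_div _ _).symm
  have hc : (x.val : ℂ) + (y.val : ℂ) = ((x + y).val : ℂ) + (p : ℂ) * k := by
    exact_mod_cast hnat
  rw [ep, ep, ep, ← Complex.exp_add]
  have key : 2 * (Real.pi : ℂ) * Complex.I * (x.val : ℂ) / p
      + 2 * (Real.pi : ℂ) * Complex.I * (y.val : ℂ) / p
      = 2 * (Real.pi : ℂ) * Complex.I * ((x + y).val : ℂ) / p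
      + (k : ℂ) * (2 * (Real.pi : ℂ) * Complex.I) := by
    have h3 : 2 * (Real.pi : ℂ) * Complex.I * (x.val : ℂ)
        + 2 * (Real.pi : ℂ) * Complex.I * (y.val : ℂ)
        = 2 * (Real.pi : ℂ) * Complex.I * ((x + y).val : ℂ)
          + (k : ℂ) * (2 * (Real.pi : ℂ) * Complex.I) * p := by
      linear_combination (2 * (Real.pi : ℂ) * Complex.I) * hc
    rw [← add_div, h3, add_div, mul_div_cancel_right₀ _ hp]
  rw [key, Complex.exp_add, Complex.exp_nat_mul_two_pi_mul_I, mul_one]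

lemma pointwise_re (w1 w2 : ℂ) (h1 : ‖w1‖ = 1) (h2 : ‖w2‖ = 1) :
    2 * w1.re + 2 * w2.re - 3 ≤ (w1 * w2).re := by
  have e1 : w1.re ^ 2 + w1.im ^ 2 = 1 := by
    have := Complex.sq_norm w1
    rw [Complex.normSq_apply] at this
    rw [h1] at this
    nlinarith [this]
  have e2 : w2.re ^ 2 + w2.im ^ 2 = 1 := by
    have := Complex.sq_norm w2
    rw [Complex.normSq_apply] at this
    rw [h2] at this
    nlinarith [this]
  simp only [Complex.mul_re]
  have hid : (1 - 2*w1.re + w1.re*w2.re - w1.im*w2.im)^2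
      + (w1.re*w2.im + w1.im*w2.re - 2*w1.im)^2
      = 6 - 4*w1.re - 4*w2.re + 2*(w1.re*w2.re - w1.im*w2.im) := by
    linear_combination (5 - 4*w2.re) * e1 + (w1.re^2 + w1.im^2) * e2
  nlinarith [sq_nonneg (1 - 2*w1.re + w1.re*w2.re - w1.im*w2.im),
    sq_nonneg (w1.re*w2.im + w1.im*w2.re - 2*w1.im), hid]

lemma exists_phase (z : ℂ) : ∃ u : ℂ, ‖u‖ = 1 ∧ u * z = (‖z‖ : ℂ) := by
  rcases eq_or_ne z 0 with rfl | hz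
  · exact ⟨1, by simp, by simp⟩
  · refine ⟨(starRingEnd ℂ) z / ‖z‖, ?_, ?_⟩
    · rw [norm_div]
      rw [RCLike.norm_conj, Complex.norm_real, Real.norm_eq_abs,
        _root_.abs_of_nonneg (norm_nonneg z)]
      exact div_self (norm_ne_zero_iff.mpr hz)
    · rw [div_mul_eq_mul_div, mul_comm, Complex.mul_conj, Complex.normSq_eq_norm_sq]
      have habs : ((‖z‖ : ℝ) : ℂ) ≠ 0 := by
        simpa [Complex.ofReal_eq_zero] using hz
      push_cast
      field_simp

lemma muHat_norm_le (p : ℕ) {F : Type} [Field F] [Fintype F] [Algebra (ZMod p) F]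
    (μ : F → ℝ) (hμ0 : ∀ t, 0 ≤ μ t) (hμ1 : ∑ t, μ t = 1) (s : F) :
    ‖muHat p μ s‖ ≤ 1 := by
  calc ‖muHat p μ s‖ ≤ ∑ t : F, ‖(μ t : ℂ) * ep p (Algebra.trace (ZMod p) F (s * t))‖ :=
        norm_sum_le _ _
    _ = ∑ t : F, μ t := by
        refine Finset.sum_congr rfl fun t _ => ?_
        rw [norm_mul, ep_norm, mul_one, Complex.norm_real, Real.norm_eq_abs,
          _root_.abs_of_nonneg (hμ0 t)]
    _ = 1 := hμ1

lemma spec_sum (p : ℕ) [Fact p.Prime] {F : Type} [Field F] [Fintype F] [Algebra (ZMod p) F]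
    (μ : F → ℝ) (hμ0 : ∀ t, 0 ≤ μ t) (hμ1 : ∑ t, μ t = 1) (θ ψ : F) :
    2 * ‖muHat p μ θ‖ + 2 * ‖muHat p μ ψ‖ - 3 ≤ ‖muHat p μ (θ + ψ)‖ := by
  haveI : NeZero p := ⟨(Fact.out : p.Prime).ne_zero⟩
  obtain ⟨u, hu, hu2⟩ := exists_phase (muHat p μ θ)
  obtain ⟨v, hv, hv2⟩ := exists_phase (muHat p μ ψ)
  set e1 : F → ℂ := fun t => ep p (Algebra.trace (ZMod p) F (θ * t)) with he1
  set e2 : F → ℂ := fun t => ep p (Algebra.trace (ZMod p) F (ψ * t)) with he2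
  have hre1 : (u * muHat p μ θ).re = ∑ t : F, μ t * (u * e1 t).re := by
    rw [muHat, Finset.mul_sum, Complex.re_sum]
    refine Finset.sum_congr rfl fun t _ => ?_
    rw [show u * ((μ t : ℂ) * e1 t) = (μ t : ℂ) * (u * e1 t) by ring,
      Complex.re_ofReal_mul]
  have hre2 : (v * muHat p μ ψ).re = ∑ t : F, μ t * (v * e2 t).re := by
    rw [muHat, Finset.mul_sum, Complex.re_sum]
    refine Finset.sum_congr rfl fun t _ => ?_
    rw [show v * ((μ t : ℂ) * e2 t) = (μ t : ℂ) * (v * e2 t) by ring,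
      Complex.re_ofReal_mul]
  have hre3 : (u * v * muHat p μ (θ + ψ)).re
      = ∑ t : F, μ t * ((u * e1 t) * (v * e2 t)).re := by
    rw [muHat, Finset.mul_sum, Complex.re_sum]
    refine Finset.sum_congr rfl fun t _ => ?_
    have htr : Algebra.trace (ZMod p) F ((θ + ψ) * t)
        = Algebra.trace (ZMod p) F (θ * t) + Algebra.trace (ZMod p) F (ψ * t) := by
      rw [add_mul, map_add]
    rw [htr, ep_add,
      show u * v * ((μ t : ℂ) * (e1 t * e2 t)) = (μ t : ℂ) * ((u * e1 t) * (v * e2 t)) by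
        simp only [he1, he2]; ring, Complex.re_ofReal_mul]
  have hsum1 : ∑ t : F, μ t * (u * e1 t).re = ‖muHat p μ θ‖ := by
    rw [← hre1, hu2, Complex.ofReal_re]
  have hsum2 : ∑ t : F, μ t * (v * e2 t).re = ‖muHat p μ ψ‖ := by
    rw [← hre2, hv2, Complex.ofReal_re]
  have hpt : ∀ t : F, μ t * (2 * (u * e1 t).re + 2 * (v * e2 t).re - 3)
      ≤ μ t * ((u * e1 t) * (v * e2 t)).re := by
    intro t
    refine mul_le_mul_of_nonneg_left ?_ (hμ0 t)
    refine pointwise_re _ _ ?_ ?_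
    · rw [norm_mul, hu, one_mul, he1]; exact ep_norm p _
    · rw [norm_mul, hv, one_mul, he2]; exact ep_norm p _
  have hle : 2 * ‖muHat p μ θ‖ + 2 * ‖muHat p μ ψ‖ - 3
      ≤ (u * v * muHat p μ (θ + ψ)).re := by
    rw [hre3]
    have hsplit : ∑ t : F, μ t * (2 * (u * e1 t).re + 2 * (v * e2 t).re - 3)
        = 2 * (∑ t : F, μ t * (u * e1 t).re) + 2 * (∑ t : F, μ t * (v * e2 t).re)
          - 3 * ∑ t : F, μ t := by
      rw [Finset.mul_sum, Finset.mul_sum, Finset.mul_sum, ← Finset.sum_add_distrib,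
        ← Finset.sum_sub_distrib]
      exact Finset.sum_congr rfl fun t _ => by ring
    have := Finset.sum_le_sum fun t (_ : t ∈ Finset.univ) => hpt t
    rw [hsplit, hsum1, hsum2, hμ1] at this
    linarith
  have hfin : (u * v * muHat p μ (θ + ψ)).re ≤ ‖muHat p μ (θ + ψ)‖ := by
    calc (u * v * muHat p μ (θ + ψ)).re ≤ ‖u * v * muHat p μ (θ + ψ)‖ :=
          Complex.re_le_norm _
      _ = ‖muHat p μ (θ + ψ)‖ := by rw [norm_mul, norm_mul, hu, hv]; ring
  linarith

theorem swap_key_inequality (p : ℕ) [Fact p.Prime] {F : Type} [Field F] [Fintype F]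
    [Algebra (ZMod p) F] (μ : F → ℝ) (hμ0 : ∀ t, 0 ≤ μ t) (hμ1 : ∑ t, μ t = 1)
    (θ ψ : F) :
    ‖muHat p μ θ * muHat p μ ψ‖ ≤
      (1 - (1 / 8 : ℝ) + (1 / 8 : ℝ) * ‖muHat p μ (θ + ψ)‖ ^ 2) ^ 2 := by
  set a := ‖muHat p μ θ‖ with hadef
  set b := ‖muHat p μ ψ‖ with hbdef
  set c := ‖muHat p μ (θ + ψ)‖ with hcdef
  have ha0 : 0 ≤ a := norm_nonneg _
  have hb0 : 0 ≤ b := norm_nonneg _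
  have hc0 : 0 ≤ c := norm_nonneg _
  have ha1 : a ≤ 1 := muHat_norm_le p μ hμ0 hμ1 θ
  have hb1 : b ≤ 1 := muHat_norm_le p μ hμ0 hμ1 ψ
  have hspec : 2 * a + 2 * b - 3 ≤ c := spec_sum p μ hμ0 hμ1 θ ψ
  rw [norm_mul, ← hadef, ← hbdef]
  have hgoal : (1 - (1 / 8 : ℝ) + (1 / 8 : ℝ) * c ^ 2) = 7 / 8 + c ^ 2 / 8 := by ring
  rw [hgoal]
  have h3 : a * b ≤ ((a + b) / 2) ^ 2 := by nlinarith [sq_nonneg (a - b)]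
  rcases le_or_gt (a + b) (3 / 2) with hab | hab
  · nlinarith [sq_nonneg c, sq_nonneg (c ^ 2)]
  · have hd : 0 ≤ 2 * a + 2 * b - 3 := by linarith
    have h1 : (2 * a + 2 * b - 3) ^ 2 ≤ c ^ 2 := pow_le_pow_left₀ hd hspec 2
    have h2 : (a + b) / 2 ≤ 7 / 8 + (2 * a + 2 * b - 3) ^ 2 / 8 := by
      nlinarith [sq_nonneg (a + b - 2)]
    have h4 : ((a + b) / 2) ^ 2 ≤ (7 / 8 + (2 * a + 2 * b - 3) ^ 2 / 8) ^ 2 :=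
      pow_le_pow_left₀ (by linarith) h2 2
    have h5 : (7 / 8 + (2 * a + 2 * b - 3) ^ 2 / 8) ^ 2 ≤ (7 / 8 + c ^ 2 / 8) ^ 2 :=
      pow_le_pow_left₀ (by positivity) (by linarith) 2
    linarith
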